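/- In the error-in-variables model with i.i.d. data, suppose ξ, ε, u have finite third absolute moments and β₀ · E[ξ³] ≠ 0. Then the third-order moment (Geary) estimator β̂ⁿ_3M = (Σ_{i=1}^n x_i y_i²)/(Σ_{i=1}^n x_i² y_i) converges in probability to β₀ as n → ∞. -/

import Mathlib

open MeasureTheory ProbabilityTheory Filter Real Topology

lemma integrable_cube {Ω : Type*} [MeasurableSpace Ω] {μ : Measure Ω} {f : Ω → ℝ}
    (hf : MemLp f 3 μ) : Integrable (fun ω => f ω ^ 3) μ := by
  have h := hf.norm_rpow (by norm_num) (by norm_num)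
  rw [memLp_one_iff_integrable] at h
  refine h.mono' ?_ ?_
  · exact (hf.aestronglyMeasurable.aemeasurable.pow_const 3).aestronglyMeasurable
  · filter_upwards with ω
    simp only [norm_pow, Real.norm_eq_abs]
    rw [ENNReal.toReal_ofNat, show ((3:ℝ)) = ((3:ℕ):ℝ) by norm_num, Real.rpow_natCast]

section Aux

variable {Ω : Type*} [MeasurableSpace Ω] {μ : Measure Ω} [IsProbabilityMeasure μ]

/-- Moment computation for three independent centered random variables with third moments:
integrability and expectation of `(X+U)*(X*β+E)^2` and `(X+U)^2*(X*β+E)`. -/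
lemma eiv_moments {X E U : Ω → ℝ} (β : ℝ)
    (hmX : Measurable X) (hmE : Measurable E) (hmU : Measurable U)
    (hindep : iIndepFun ![X, E, U] μ)
    (hX0 : ∫ ω, X ω ∂μ = 0) (hE0 : ∫ ω, E ω ∂μ = 0) (hU0 : ∫ ω, U ω ∂μ = 0)
    (hX3 : MemLp X 3 μ) (hE3 : MemLp E 3 μ) (hU3 : MemLp U 3 μ) :
    (Integrable (fun ω => (X ω + U ω) * (X ω * β + E ω) ^ 2) μ ∧
      ∫ ω, (X ω + U ω) * (X ω * β + E ω) ^ 2 ∂μ = β ^ 2 * ∫ ω, X ω ^ 3 ∂μ) ∧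
    (Integrable (fun ω => (X ω + U ω) ^ 2 * (X ω * β + E ω)) μ ∧
      ∫ ω, (X ω + U ω) ^ 2 * (X ω * β + E ω) ∂μ = β * ∫ ω, X ω ^ 3 ∂μ) := by
  have hm3 : ∀ i : Fin 3, Measurable (![X, E, U] i) := by
    intro i
    fin_cases i
    · exact hmX
    · exact hmE
    · exact hmU
  -- basic independence facts
  have hXE : IndepFun X E μ := hindep.indepFun (show (0 : Fin 3) ≠ 1 by decide)
  have hXU : IndepFun X U μ := hindep.indepFun (show (0 : Fin 3) ≠ 2 by decide)
  have hEU : IndepFun E U μ := hindep.indepFun (show (1 : Fin 3) ≠ 2 by decide)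
  have hXE_U : IndepFun (fun ω => X ω * E ω) U μ :=
    hindep.indepFun_mul_left hm3 0 1 2 (by decide) (by decide)
  have hsq : Measurable fun x : ℝ => x ^ 2 := measurable_id.pow_const 2
  have hX2E : IndepFun (fun ω => X ω ^ 2) E μ := hXE.comp hsq measurable_id
  have hX2U : IndepFun (fun ω => X ω ^ 2) U μ := hXU.comp hsq measurable_id
  have hXE2 : IndepFun X (fun ω => E ω ^ 2) μ := hXE.comp measurable_id hsq
  have hE2U : IndepFun (fun ω => E ω ^ 2) U μ := hEU.comp hsq measurable_id
  have hXU2 : IndepFun X (fun ω => U ω ^ 2) μ := hXU.comp measurable_id hsq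
  have hEU2 : IndepFun E (fun ω => U ω ^ 2) μ := hEU.comp measurable_id hsq
  -- integrability of basic pieces
  have iX : Integrable X μ := hX3.integrable (by norm_num)
  have iE : Integrable E μ := hE3.integrable (by norm_num)
  have iU : Integrable U μ := hU3.integrable (by norm_num)
  have iX2 : Integrable (fun ω => X ω ^ 2) μ :=
    (hX3.mono_exponent (by norm_num)).integrable_sq
  have iE2 : Integrable (fun ω => E ω ^ 2) μ :=
    (hE3.mono_exponent (by norm_num)).integrable_sq
  have iU2 : Integrable (fun ω => U ω ^ 2) μ :=
    (hU3.mono_exponent (by norm_num)).integrable_sq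
  have iX3 : Integrable (fun ω => X ω ^ 3) μ := integrable_cube hX3
  have iXE : Integrable (fun ω => X ω * E ω) μ := hXE.integrable_mul iX iE
  have iX2E : Integrable (fun ω => X ω ^ 2 * E ω) μ := hX2E.integrable_mul iX2 iE
  have iX2U : Integrable (fun ω => X ω ^ 2 * U ω) μ := hX2U.integrable_mul iX2 iU
  have iXE2 : Integrable (fun ω => X ω * E ω ^ 2) μ := hXE2.integrable_mul iX iE2
  have iE2U : Integrable (fun ω => E ω ^ 2 * U ω) μ := hE2U.integrable_mul iE2 iU
  have iXU2 : Integrable (fun ω => X ω * U ω ^ 2) μ := hXU2.integrable_mul iX iU2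
  have iEU2 : Integrable (fun ω => E ω * U ω ^ 2) μ := hEU2.integrable_mul iE iU2
  have iXEU : Integrable (fun ω => X ω * E ω * U ω) μ := hXE_U.integrable_mul iXE iU
  -- vanishing integrals
  have vX2E : ∫ ω, X ω ^ 2 * E ω ∂μ = 0 := by
    rw [hX2E.integral_fun_mul_eq_mul_integral iX2.1 iE.1, hE0, mul_zero]
  have vX2U : ∫ ω, X ω ^ 2 * U ω ∂μ = 0 := by
    rw [hX2U.integral_fun_mul_eq_mul_integral iX2.1 iU.1, hU0, mul_zero]
  have vXE2 : ∫ ω, X ω * E ω ^ 2 ∂μ = 0 := by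
    rw [hXE2.integral_fun_mul_eq_mul_integral iX.1 iE2.1, hX0, zero_mul]
  have vE2U : ∫ ω, E ω ^ 2 * U ω ∂μ = 0 := by
    rw [hE2U.integral_fun_mul_eq_mul_integral iE2.1 iU.1, hU0, mul_zero]
  have vXU2 : ∫ ω, X ω * U ω ^ 2 ∂μ = 0 := by
    rw [hXU2.integral_fun_mul_eq_mul_integral iX.1 iU2.1, hX0, zero_mul]
  have vEU2 : ∫ ω, E ω * U ω ^ 2 ∂μ = 0 := by
    rw [hEU2.integral_fun_mul_eq_mul_integral iE.1 iU2.1, hE0, zero_mul]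
  have vXEU : ∫ ω, X ω * E ω * U ω ∂μ = 0 := by
    rw [hXE_U.integral_fun_mul_eq_mul_integral iXE.1 iU.1, hU0, mul_zero]
  constructor
  · -- numerator: (X+U)(Xβ+E)^2
    have hfun : (fun ω => (X ω + U ω) * (X ω * β + E ω) ^ 2)
        = fun ω => β ^ 2 * X ω ^ 3 + (2 * β * (X ω ^ 2 * E ω) + (X ω * E ω ^ 2 +
            (β ^ 2 * (X ω ^ 2 * U ω) + (2 * β * (X ω * E ω * U ω) + E ω ^ 2 * U ω)))) := by
      funext ω; ring
    have i7 : Integrable (fun ω => 2 * β * (X ω * E ω * U ω) + E ω ^ 2 * U ω) μ :=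
      (iXEU.const_mul _).add iE2U
    have i6 : Integrable (fun ω => β ^ 2 * (X ω ^ 2 * U ω) +
        (2 * β * (X ω * E ω * U ω) + E ω ^ 2 * U ω)) μ :=
      (iX2U.const_mul _).add i7
    have i5 : Integrable (fun ω => X ω * E ω ^ 2 + (β ^ 2 * (X ω ^ 2 * U ω) +
        (2 * β * (X ω * E ω * U ω) + E ω ^ 2 * U ω))) μ := iXE2.add i6
    have i4 : Integrable (fun ω => 2 * β * (X ω ^ 2 * E ω) + (X ω * E ω ^ 2 +
        (β ^ 2 * (X ω ^ 2 * U ω) + (2 * β * (X ω * E ω * U ω) + E ω ^ 2 * U ω)))) μ :=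
      (iX2E.const_mul _).add i5
    constructor
    · rw [hfun]; exact (iX3.const_mul _).add i4
    · rw [hfun, integral_add (iX3.const_mul _) i4,
        integral_add (iX2E.const_mul _) i5, integral_add iXE2 i6,
        integral_add (iX2U.const_mul _) i7,
        integral_add (iXEU.const_mul _) iE2U,
        integral_const_mul, integral_const_mul, integral_const_mul, integral_const_mul,
        vX2E, vXE2, vX2U, vXEU, vE2U]
      ring
  · -- denominator: (X+U)^2(Xβ+E)
    have hfun : (fun ω => (X ω + U ω) ^ 2 * (X ω * β + E ω))
        = fun ω => β * X ω ^ 3 + (X ω ^ 2 * E ω + (2 * β * (X ω ^ 2 * U ω) +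
            (2 * (X ω * E ω * U ω) + (β * (X ω * U ω ^ 2) + E ω * U ω ^ 2)))) := by
      funext ω; ring
    have i7 : Integrable (fun ω => β * (X ω * U ω ^ 2) + E ω * U ω ^ 2) μ :=
      (iXU2.const_mul _).add iEU2
    have i6 : Integrable (fun ω => 2 * (X ω * E ω * U ω) +
        (β * (X ω * U ω ^ 2) + E ω * U ω ^ 2)) μ :=
      (iXEU.const_mul _).add i7
    have i5 : Integrable (fun ω => 2 * β * (X ω ^ 2 * U ω) + (2 * (X ω * E ω * U ω) +
        (β * (X ω * U ω ^ 2) + E ω * U ω ^ 2))) μ := (iX2U.const_mul _).add i6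
    have i4 : Integrable (fun ω => X ω ^ 2 * E ω + (2 * β * (X ω ^ 2 * U ω) +
        (2 * (X ω * E ω * U ω) + (β * (X ω * U ω ^ 2) + E ω * U ω ^ 2)))) μ := iX2E.add i5
    constructor
    · rw [hfun]; exact (iX3.const_mul _).add i4
    · rw [hfun, integral_add (iX3.const_mul _) i4,
        integral_add iX2E i5,
        integral_add (iX2U.const_mul _) i6,
        integral_add (iXEU.const_mul _) i7,
        integral_add (iXU2.const_mul _) iEU2,
        integral_const_mul, integral_const_mul, integral_const_mul, integral_const_mul,
        vX2E, vX2U, vXEU, vXU2, vEU2]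
      ring

end Aux

/-- In the error-in-variables model with i.i.d. data, finite third
absolute moments and β₀ · E[ξ³] ≠ 0, the third-order moment (Geary) estimator
(Σ x_i y_i²)/(Σ x_i² y_i) converges in probability to β₀. -/
theorem eiv_geary_consistent
    {Ω : Type*} [MeasurableSpace Ω] (μ : Measure Ω) [IsProbabilityMeasure μ]
    (ξ ε u : ℕ → Ω → ℝ) (β₀ : ℝ)
    (hmξ : ∀ i, Measurable (ξ i)) (hmε : ∀ i, Measurable (ε i))
    (hmu : ∀ i, Measurable (u i))
    (hindep_seq : iIndepFun
      (fun i ω => (ξ i ω, ε i ω, u i ω)) μ)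
    (hident : ∀ i, IdentDistrib (fun ω => (ξ i ω, ε i ω, u i ω))
      (fun ω => (ξ 0 ω, ε 0 ω, u 0 ω)) μ μ)
    (hindep0 : iIndepFun ![ξ 0, ε 0, u 0] μ)
    (hξ0 : ∫ ω, ξ 0 ω ∂μ = 0) (hε0 : ∫ ω, ε 0 ω ∂μ = 0) (hu0 : ∫ ω, u 0 ω ∂μ = 0)
    (hξ3 : MemLp (ξ 0) 3 μ) (hε3 : MemLp (ε 0) 3 μ) (hu3 : MemLp (u 0) 3 μ)
    (hβξ : β₀ * ∫ ω, (ξ 0 ω) ^ 3 ∂μ ≠ 0) :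
    TendstoInMeasure μ
      (fun n ω => (∑ i ∈ Finset.range n, (ξ i ω + u i ω) * (ξ i ω * β₀ + ε i ω) ^ 2) /
        (∑ i ∈ Finset.range n, (ξ i ω + u i ω) ^ 2 * (ξ i ω * β₀ + ε i ω)))
      atTop (fun _ => β₀) := by
  set M : ℝ := ∫ ω, (ξ 0 ω) ^ 3 ∂μ with hM
  -- the transforming maps
  set φ : ℝ × ℝ × ℝ → ℝ := fun p => (p.1 + p.2.2) * (p.1 * β₀ + p.2.1) ^ 2 with hφ
  set ψ : ℝ × ℝ × ℝ → ℝ := fun p => (p.1 + p.2.2) ^ 2 * (p.1 * β₀ + p.2.1) with hψ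
  have hφm : Measurable φ := by fun_prop
  have hψm : Measurable ψ := by fun_prop
  -- the two sequences
  set F : ℕ → Ω → ℝ := fun i ω => (ξ i ω + u i ω) * (ξ i ω * β₀ + ε i ω) ^ 2 with hF
  set G : ℕ → Ω → ℝ := fun i ω => (ξ i ω + u i ω) ^ 2 * (ξ i ω * β₀ + ε i ω) with hG
  have hFm : ∀ i, Measurable (F i) := fun i =>
    ((hmξ i).add (hmu i)).mul ((((hmξ i).mul_const β₀).add (hmε i)).pow_const 2)
  have hGm : ∀ i, Measurable (G i) := fun i =>
    (((hmξ i).add (hmu i)).pow_const 2).mul (((hmξ i).mul_const β₀).add (hmε i))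
  -- pairwise independence and identical distribution
  have hFindep : Pairwise (Function.onFun (IndepFun · · μ) F) := fun i j hij =>
    (hindep_seq.indepFun hij).comp hφm hφm
  have hGindep : Pairwise (Function.onFun (IndepFun · · μ) G) := fun i j hij =>
    (hindep_seq.indepFun hij).comp hψm hψm
  have hFid : ∀ i, IdentDistrib (F i) (F 0) μ μ := fun i => (hident i).comp hφm
  have hGid : ∀ i, IdentDistrib (G i) (G 0) μ μ := fun i => (hident i).comp hψm
  -- moments
  obtain ⟨⟨hFint, hFval⟩, hGint, hGval⟩ :=
    eiv_moments (μ := μ) β₀ (hmξ 0) (hmε 0) (hmu 0) hindep0 hξ0 hε0 hu0 hξ3 hε3 hu3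
  -- strong law for both sequences
  have hA := strong_law_ae F hFint hFindep hFid
  have hB := strong_law_ae G hGint hGindep hGid
  have hMne : β₀ * M ≠ 0 := hβξ
  refine tendstoInMeasure_of_tendsto_ae (fun n => ?_) ?_
  · exact ((Finset.measurable_sum _ fun i _ => hFm i).div
      (Finset.measurable_sum _ fun i _ => hGm i)).aestronglyMeasurable
  · filter_upwards [hA, hB] with ω h1 h2
    have h1' : Tendsto (fun n : ℕ => (n : ℝ)⁻¹ * ∑ i ∈ Finset.range n, F i ω) atTop
        (𝓝 (β₀ ^ 2 * M)) := by
      have := h1; rw [hFval] at this; simpa [smul_eq_mul] using this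
    have h2' : Tendsto (fun n : ℕ => (n : ℝ)⁻¹ * ∑ i ∈ Finset.range n, G i ω) atTop
        (𝓝 (β₀ * M)) := by
      have := h2; rw [hGval] at this; simpa [smul_eq_mul] using this
    have hdiv := h1'.div h2' hMne
    have hval : β₀ ^ 2 * M / (β₀ * M) = β₀ := by
      rw [show β₀ ^ 2 * M = β₀ * (β₀ * M) by ring, mul_div_assoc, div_self hMne, mul_one]
    rw [hval] at hdiv
    refine hdiv.congr' ?_
    filter_upwards [eventually_ge_atTop 1] with n hn
    have hne : ((n : ℝ))⁻¹ ≠ 0 := inv_ne_zero (Nat.cast_ne_zero.mpr (by omega))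
    exact mul_div_mul_left _ _ hne
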